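/- For any admissible control u ∈ 𝕌₁ and any (x, u, t) ∈ ℝ^n × ℝ^m × [0,T], the function g_u(s; x, u, t) := ∫_t^s r(x(τ), u(τ)) dτ + Q(x(s), u(s), s), where x is the Carathéodory trajectory with x(t) = x driven by u and u(t) = u, is non-decreasing in s on [t, T]. -/

import Mathlib

open MeasureTheory Set

noncomputable section

/-- Carathéodory solution of `ẋ(s) = f(x(s), u(s))` on `[t, T]`:
`x s = x t + ∫_t^s f(x(τ), u(τ)) dτ` (with the integrand interval integrable). -/
def IsTrajectory {n m : ℕ}
    (f : EuclideanSpace ℝ (Fin n) → EuclideanSpace ℝ (Fin m) → EuclideanSpace ℝ (Fin n))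
    (t T : ℝ) (x : ℝ → EuclideanSpace ℝ (Fin n)) (u : ℝ → EuclideanSpace ℝ (Fin m)) : Prop :=
  ∀ s ∈ Set.Icc t T,
    IntervalIntegrable (fun τ => f (x τ) (u τ)) MeasureTheory.volume t s ∧
      x s = x t + ∫ τ in t..s, f (x τ) (u τ)

/-- The total cost `∫_t^T r(x(s), u(s)) ds + q(x(T))`. -/
def cost {n m : ℕ}
    (r : EuclideanSpace ℝ (Fin n) → EuclideanSpace ℝ (Fin m) → ℝ)
    (q : EuclideanSpace ℝ (Fin n) → ℝ) (t T : ℝ)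
    (x : ℝ → EuclideanSpace ℝ (Fin n)) (u : ℝ → EuclideanSpace ℝ (Fin m)) : ℝ :=
  (∫ s in t..T, r (x s) (u s)) + q (x T)

/-- Admissible controls `𝕌₁`: Lipschitz continuous on `[0, T]` with
Lipschitz constant (equivalently, `‖u̇‖_{L^∞}` bound) `M`. -/
def Adm {m : ℕ} (M T : ℝ) (u : ℝ → EuclideanSpace ℝ (Fin m)) : Prop :=
  LipschitzOnWith (Real.toNNReal M) u (Set.Icc 0 T)

/-- The Q-function
`Q(x₀,u₀,t) = inf { ∫_t^T r(x(s),u(s)) ds + q(x(T)) : u ∈ 𝕌₁, x(t) = x₀, u(t) = u₀ }`. -/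
def Qfun {n m : ℕ}
    (f : EuclideanSpace ℝ (Fin n) → EuclideanSpace ℝ (Fin m) → EuclideanSpace ℝ (Fin n))
    (r : EuclideanSpace ℝ (Fin n) → EuclideanSpace ℝ (Fin m) → ℝ)
    (q : EuclideanSpace ℝ (Fin n) → ℝ) (M T : ℝ)
    (x₀ : EuclideanSpace ℝ (Fin n)) (u₀ : EuclideanSpace ℝ (Fin m)) (t : ℝ) : ℝ :=
  sInf { c : ℝ | ∃ x u, Adm M T u ∧ IsTrajectory f t T x u ∧
      x t = x₀ ∧ u t = u₀ ∧ c = cost r q t T x u }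

/- ### Auxiliary lemmas -/

section Aux

variable {n m : ℕ}
  {f : EuclideanSpace ℝ (Fin n) → EuclideanSpace ℝ (Fin m) → EuclideanSpace ℝ (Fin n)}
  {r : EuclideanSpace ℝ (Fin n) → EuclideanSpace ℝ (Fin m) → ℝ}
  {q : EuclideanSpace ℝ (Fin n) → ℝ}

/-- A trajectory restricted to a later starting time is still a trajectory. -/
lemma traj_restrict {t T s : ℝ} {x : ℝ → EuclideanSpace ℝ (Fin n)}
    {u : ℝ → EuclideanSpace ℝ (Fin m)}
    (hx : IsTrajectory f t T x u) (hs : s ∈ Set.Icc t T) : IsTrajectory f s T x u := by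
  intro s' hs'
  have h1 := hx s ⟨hs.1, hs.2⟩
  have h2 := hx s' ⟨hs.1.trans hs'.1, hs'.2⟩
  have hint : IntervalIntegrable (fun τ => f (x τ) (u τ)) volume s s' :=
    h1.1.symm.trans h2.1
  refine ⟨hint, ?_⟩
  have hadd := intervalIntegral.integral_add_adjacent_intervals h1.1 hint
  rw [h2.2, ← hadd, h1.2, add_assoc]

/-- A trajectory is continuous on its time interval. -/
lemma traj_cont {t T : ℝ} {x : ℝ → EuclideanSpace ℝ (Fin n)}
    {u : ℝ → EuclideanSpace ℝ (Fin m)}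
    (hx : IsTrajectory f t T x u) : ContinuousOn x (Set.Icc t T) := by
  rcases le_or_gt t T with hle | hlt
  · have hint := (hx T ⟨hle, le_rfl⟩).1
    have hc : ContinuousOn (fun s => x t + ∫ τ in t..s, f (x τ) (u τ)) (Set.Icc t T) := by
      have h := intervalIntegral.continuousOn_primitive_interval' hint
        (Set.left_mem_uIcc (a := t) (b := T))
      rw [Set.uIcc_of_le hle] at h
      exact continuousOn_const.add h
    exact hc.congr fun s hs => (hx s hs).2
  · rw [Set.Icc_eq_empty (not_le.mpr hlt)]
    exact continuousOn_empty _

/-- Interval integrability from integrability of a function agreeing on `uIcc`. -/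
lemma II_of_eqOn {E : Type*} [NormedAddCommGroup E] {g h : ℝ → E} {a b : ℝ}
    (hg : IntervalIntegrable g volume a b) (heq : Set.EqOn h g (Set.uIcc a b)) :
    IntervalIntegrable h volume a b := by
  refine hg.congr ?_
  intro τ hτ
  exact (heq (Set.uIoc_subset_uIcc hτ)).symm

end Aux

/-- Along any admissible control, the function
`g_u(s) := ∫_t^s r(x(τ), u(τ)) dτ + Q(x(s), u(s), s)` is non-decreasing on `[t, T]`. -/
theorem g_monotoneOn {n m : ℕ}
    (f : EuclideanSpace ℝ (Fin n) → EuclideanSpace ℝ (Fin m) → EuclideanSpace ℝ (Fin n))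
    (r : EuclideanSpace ℝ (Fin n) → EuclideanSpace ℝ (Fin m) → ℝ)
    (q : EuclideanSpace ℝ (Fin n) → ℝ) (M T : ℝ) (hM : 0 < M)
    (Cf Cr Cq : ℝ)
    (hfb : ∀ x u, ‖f x u‖ ≤ Cf) (hrb : ∀ x u, |r x u| ≤ Cr) (hqb : ∀ x, |q x| ≤ Cq)
    (Kf Kr Kq : NNReal)
    (hfl : LipschitzWith Kf (fun p : EuclideanSpace ℝ (Fin n) × EuclideanSpace ℝ (Fin m) => f p.1 p.2))
    (hrl : LipschitzWith Kr (fun p : EuclideanSpace ℝ (Fin n) × EuclideanSpace ℝ (Fin m) => r p.1 p.2))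
    (hql : LipschitzWith Kq q)
    (x₀ : EuclideanSpace ℝ (Fin n)) (u₀ : EuclideanSpace ℝ (Fin m))
    (t : ℝ) (ht : t ∈ Set.Icc 0 T)
    (x : ℝ → EuclideanSpace ℝ (Fin n)) (u : ℝ → EuclideanSpace ℝ (Fin m))
    (hu : Adm M T u) (hx : IsTrajectory f t T x u) (hx₀ : x t = x₀) (hu₀ : u t = u₀) :
    MonotoneOn
      (fun s => (∫ τ in t..s, r (x τ) (u τ)) + Qfun f r q M T (x s) (u s) s)
      (Set.Icc t T) := by
  have hM' : (Real.toNNReal M : ℝ) = M := Real.coe_toNNReal M hM.le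
  -- continuity of the data along (x, u)
  have hxc : ContinuousOn x (Set.Icc t T) := traj_cont hx
  have huc : ContinuousOn u (Set.Icc t T) :=
    hu.continuousOn.mono (Set.Icc_subset_Icc ht.1 le_rfl)
  have hr_int : ∀ a ∈ Set.Icc t T, ∀ b ∈ Set.Icc t T,
      IntervalIntegrable (fun τ => r (x τ) (u τ)) volume a b := by
    intro a ha b hb
    have hsub : Set.uIcc a b ⊆ Set.Icc t T := Set.uIcc_subset_Icc ha hb
    exact (hrl.continuous.comp_continuousOn
      (((hxc.mono hsub).prodMk (huc.mono hsub)))).intervalIntegrable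
  have hf_int : ∀ a ∈ Set.Icc t T, ∀ b ∈ Set.Icc t T,
      IntervalIntegrable (fun τ => f (x τ) (u τ)) volume a b := by
    intro a ha b hb
    exact (hx a ha).1.symm.trans (hx b hb).1
  intro s₁ hs₁ s₂ hs₂ h12
  simp only
  -- key dynamic programming inequality
  have key : Qfun f r q M T (x s₁) (u s₁) s₁ ≤
      (∫ τ in s₁..s₂, r (x τ) (u τ)) + Qfun f r q M T (x s₂) (u s₂) s₂ := by
    set S₁ : Set ℝ := { c : ℝ | ∃ x' u', Adm M T u' ∧ IsTrajectory f s₁ T x' u' ∧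
        x' s₁ = x s₁ ∧ u' s₁ = u s₁ ∧ c = cost r q s₁ T x' u' } with hS₁
    set S₂ : Set ℝ := { c : ℝ | ∃ x' u', Adm M T u' ∧ IsTrajectory f s₂ T x' u' ∧
        x' s₂ = x s₂ ∧ u' s₂ = u s₂ ∧ c = cost r q s₂ T x' u' } with hS₂
    have hQ₁ : Qfun f r q M T (x s₁) (u s₁) s₁ = sInf S₁ := rfl
    have hQ₂ : Qfun f r q M T (x s₂) (u s₂) s₂ = sInf S₂ := rfl
    have hbdd₁ : BddBelow S₁ := by
      refine ⟨-(Cr * |T - s₁| + Cq), ?_⟩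
      rintro c ⟨x', u', _, _, _, _, rfl⟩
      have h1 : |∫ s in s₁..T, r (x' s) (u' s)| ≤ Cr * |T - s₁| := by
        have := intervalIntegral.norm_integral_le_of_norm_le_const
          (f := fun s => r (x' s) (u' s)) (a := s₁) (b := T) (C := Cr)
          (fun τ _ => by simpa [Real.norm_eq_abs] using hrb (x' τ) (u' τ))
        simpa [Real.norm_eq_abs] using this
      have h2 : |q (x' T)| ≤ Cq := hqb _
      have := abs_le.mp h1
      have := abs_le.mp h2
      simp only [cost]
      linarith [(abs_le.mp h1).1, (abs_le.mp h2).1]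
    have hne₂ : S₂.Nonempty :=
      ⟨cost r q s₂ T x u, x, u, hu, traj_restrict hx hs₂, rfl, rfl, rfl⟩
    rw [hQ₁, hQ₂]
    have key' : ∀ c ∈ S₂, sInf S₁ ≤ (∫ τ in s₁..s₂, r (x τ) (u τ)) + c := by
      rintro c ⟨x', u', hu', hx', hxs, hus, rfl⟩
      classical
      set x'' : ℝ → EuclideanSpace ℝ (Fin n) := fun τ => if τ ≤ s₂ then x τ else x' τ with hx''
      set u'' : ℝ → EuclideanSpace ℝ (Fin m) := fun τ => if τ ≤ s₂ then u τ else u' τ with hu''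
      have hxe1 : ∀ τ, τ ≤ s₂ → x'' τ = x τ := fun τ hτ => if_pos hτ
      have hxe2 : ∀ τ, s₂ ≤ τ → x'' τ = x' τ := by
        intro τ hτ
        by_cases h : τ ≤ s₂
        · have : τ = s₂ := le_antisymm h hτ
          simp [x'', this, hxs]
        · exact if_neg h
      have hue1 : ∀ τ, τ ≤ s₂ → u'' τ = u τ := fun τ hτ => if_pos hτ
      have hue2 : ∀ τ, s₂ ≤ τ → u'' τ = u' τ := by
        intro τ hτ
        by_cases h : τ ≤ s₂
        · have : τ = s₂ := le_antisymm h hτ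
          simp [u'', this, hus]
        · exact if_neg h
      have hs₂0T : s₂ ∈ Set.Icc (0:ℝ) T := ⟨ht.1.trans hs₂.1, hs₂.2⟩
      -- admissibility of the concatenated control
      have hadm'' : Adm M T u'' := by
        unfold Adm
        apply LipschitzOnWith.of_dist_le_mul
        intro a ha b hb
        rw [hM']
        have key2 : ∀ a ∈ Set.Icc (0:ℝ) T, ∀ b ∈ Set.Icc (0:ℝ) T, a ≤ s₂ → s₂ ≤ b →
            dist (u'' a) (u'' b) ≤ M * dist a b := by
          intro a ha b hb has hsb
          rw [hue1 a has, hue2 b hsb]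
          calc dist (u a) (u' b) ≤ dist (u a) (u s₂) + dist (u' s₂) (u' b) := by
                rw [hus]; exact dist_triangle _ _ _
            _ ≤ M * dist a s₂ + M * dist s₂ b := by
                have h1 := hu.dist_le_mul a ha s₂ hs₂0T
                have h2 := hu'.dist_le_mul s₂ hs₂0T b hb
                rw [hM'] at h1 h2
                linarith
            _ = M * dist a b := by
                rw [Real.dist_eq, Real.dist_eq, Real.dist_eq,
                  abs_of_nonpos (by linarith), abs_of_nonpos (by linarith),
                  abs_of_nonpos (by linarith)]
                ring
        by_cases has : a ≤ s₂ <;> by_cases hbs : b ≤ s₂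
        · rw [hue1 a has, hue1 b hbs]
          have := hu.dist_le_mul a ha b hb
          rwa [hM'] at this
        · exact key2 a ha b hb has (le_of_not_ge hbs)
        · rw [dist_comm, dist_comm a b]
          exact key2 b hb a ha hbs (le_of_not_ge has)
        · rw [hue2 a (le_of_not_ge has), hue2 b (le_of_not_ge hbs)]
          have := hu'.dist_le_mul a ha b hb
          rwa [hM'] at this
      -- integrability of f along x', u'
      have hx'c : ContinuousOn x' (Set.Icc s₂ T) := traj_cont hx'
      have hu'c : ContinuousOn u' (Set.Icc s₂ T) :=
        hu'.continuousOn.mono (Set.Icc_subset_Icc hs₂0T.1 le_rfl)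
      have hf_int' : ∀ a ∈ Set.Icc s₂ T, ∀ b ∈ Set.Icc s₂ T,
          IntervalIntegrable (fun τ => f (x' τ) (u' τ)) volume a b := by
        intro a ha b hb
        exact (hx' a ha).1.symm.trans (hx' b hb).1
      have hr_int' : ∀ a ∈ Set.Icc s₂ T, ∀ b ∈ Set.Icc s₂ T,
          IntervalIntegrable (fun τ => r (x' τ) (u' τ)) volume a b := by
        intro a ha b hb
        have hsub : Set.uIcc a b ⊆ Set.Icc s₂ T := Set.uIcc_subset_Icc ha hb
        exact (hrl.continuous.comp_continuousOn
          (((hx'c.mono hsub).prodMk (hu'c.mono hsub)))).intervalIntegrable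
      -- equality of integrands on the two pieces
      have heqf1 : ∀ {a b : ℝ}, a ≤ s₂ → b ≤ s₂ →
          Set.EqOn (fun τ => f (x'' τ) (u'' τ)) (fun τ => f (x τ) (u τ)) (Set.uIcc a b) := by
        intro a b ha hb τ hτ
        have : τ ≤ s₂ := le_trans hτ.2 (max_le ha hb)
        simp only [hxe1 τ this, hue1 τ this]
      have heqf2 : ∀ {a b : ℝ}, s₂ ≤ a → s₂ ≤ b →
          Set.EqOn (fun τ => f (x'' τ) (u'' τ)) (fun τ => f (x' τ) (u' τ)) (Set.uIcc a b) := by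
        intro a b ha hb τ hτ
        have : s₂ ≤ τ := le_trans (le_min ha hb) hτ.1
        simp only [hxe2 τ this, hue2 τ this]
      have heqr1 : ∀ {a b : ℝ}, a ≤ s₂ → b ≤ s₂ →
          Set.EqOn (fun τ => r (x'' τ) (u'' τ)) (fun τ => r (x τ) (u τ)) (Set.uIcc a b) := by
        intro a b ha hb τ hτ
        have : τ ≤ s₂ := le_trans hτ.2 (max_le ha hb)
        simp only [hxe1 τ this, hue1 τ this]
      have heqr2 : ∀ {a b : ℝ}, s₂ ≤ a → s₂ ≤ b →
          Set.EqOn (fun τ => r (x'' τ) (u'' τ)) (fun τ => r (x' τ) (u' τ)) (Set.uIcc a b) := by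
        intro a b ha hb τ hτ
        have : s₂ ≤ τ := le_trans (le_min ha hb) hτ.1
        simp only [hxe2 τ this, hue2 τ this]
      -- some interval memberships
      have hs₁tT : s₁ ∈ Set.Icc t T := hs₁
      have hs₂tT : s₂ ∈ Set.Icc t T := hs₂
      have hT : T ∈ Set.Icc s₂ T := ⟨hs₂.2, le_rfl⟩
      have hs₂s : s₂ ∈ Set.Icc s₂ T := ⟨le_rfl, hs₂.2⟩
      -- the concatenated trajectory
      have htraj'' : IsTrajectory f s₁ T x'' u'' := by
        have htr₁ : IsTrajectory f s₁ T x u := traj_restrict hx hs₁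
        intro s hs
        by_cases hss : s ≤ s₂
        · have hsIcc : s ∈ Set.Icc t T := ⟨hs₁.1.trans hs.1, hs.2⟩
          have hint : IntervalIntegrable (fun τ => f (x'' τ) (u'' τ)) volume s₁ s :=
            II_of_eqOn (hf_int s₁ hs₁tT s hsIcc) (heqf1 h12 hss)
          refine ⟨hint, ?_⟩
          rw [hxe1 s hss, hxe1 s₁ h12,
            intervalIntegral.integral_congr (heqf1 h12 hss)]
          exact (htr₁ s ⟨hs.1, hs.2⟩).2
        · have hss' : s₂ ≤ s := le_of_not_ge hss
          have hsIcc : s ∈ Set.Icc s₂ T := ⟨hss', hs.2⟩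
          have hint1 : IntervalIntegrable (fun τ => f (x'' τ) (u'' τ)) volume s₁ s₂ :=
            II_of_eqOn (hf_int s₁ hs₁tT s₂ hs₂tT) (heqf1 h12 le_rfl)
          have hint2 : IntervalIntegrable (fun τ => f (x'' τ) (u'' τ)) volume s₂ s :=
            II_of_eqOn (hf_int' s₂ hs₂s s hsIcc) (heqf2 le_rfl hss')
          refine ⟨hint1.trans hint2, ?_⟩
          rw [← intervalIntegral.integral_add_adjacent_intervals hint1 hint2,
            intervalIntegral.integral_congr (heqf1 h12 le_rfl),
            intervalIntegral.integral_congr (heqf2 le_rfl hss'),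
            hxe2 s hss', hxe1 s₁ h12]
          have e1 : x' s = x' s₂ + ∫ τ in s₂..s, f (x' τ) (u' τ) := (hx' s hsIcc).2
          have e2 : x s₂ = x s₁ + ∫ τ in s₁..s₂, f (x τ) (u τ) :=
            (htr₁ s₂ ⟨h12, hs₂.2⟩).2
          rw [e1, hxs, e2, add_assoc]
      -- membership of the concatenated cost in S₁
      have hmem : cost r q s₁ T x'' u'' ∈ S₁ :=
        ⟨x'', u'', hadm'', htraj'', hxe1 s₁ h12, hue1 s₁ h12, rfl⟩
      have hle := csInf_le hbdd₁ hmem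
      -- compute the concatenated cost
      have hcost : cost r q s₁ T x'' u'' =
          (∫ τ in s₁..s₂, r (x τ) (u τ)) + cost r q s₂ T x' u' := by
        have hint1 : IntervalIntegrable (fun τ => r (x'' τ) (u'' τ)) volume s₁ s₂ :=
          II_of_eqOn (hr_int s₁ hs₁tT s₂ hs₂tT) (heqr1 h12 le_rfl)
        have hint2 : IntervalIntegrable (fun τ => r (x'' τ) (u'' τ)) volume s₂ T :=
          II_of_eqOn (hr_int' s₂ hs₂s T hT) (heqr2 le_rfl hs₂.2)
        simp only [cost]
        rw [← intervalIntegral.integral_add_adjacent_intervals hint1 hint2,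
          intervalIntegral.integral_congr (heqr1 h12 le_rfl),
          intervalIntegral.integral_congr (heqr2 le_rfl hs₂.2),
          hxe2 T hs₂.2]
        ring
      rw [hcost] at hle
      exact hle
    have hfin : sInf S₁ - (∫ τ in s₁..s₂, r (x τ) (u τ)) ≤ sInf S₂ :=
      le_csInf hne₂ (fun c hc =>
        (by linarith [key' c hc] : sInf S₁ - (∫ τ in s₁..s₂, r (x τ) (u τ)) ≤ c))
    linarith
  have hadd : (∫ τ in t..s₂, r (x τ) (u τ)) =
      (∫ τ in t..s₁, r (x τ) (u τ)) + ∫ τ in s₁..s₂, r (x τ) (u τ) :=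
    (intervalIntegral.integral_add_adjacent_intervals
      (hr_int t ⟨le_rfl, ht.2.trans_eq rfl⟩ s₁ hs₁)
      (hr_int s₁ hs₁ s₂ hs₂)).symm
  rw [hadd]
  linarith

end
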